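/- Let m ≥ 2 be an integer and let L be a lattice generated by m elements that embeds into Co(P) for some poset P of length at most 2. Then L embeds into a direct product of lattices of the form Co(P_{I,J}), where each factor satisfies |I| + |J| ≤ 2^m − 1. -/

import Mathlib

/-! Common definitions: lattices of order-convex subsets of a poset,
length of a poset, the identities (S), (U), (B), (L2), (H_n), (H_{m,n}),
join-irreducibility, the join-dependency relation, join-seeds,
the posets P_{I,J}, tree-like posets, D-closed sets,
and complete lattice congruences. -/

open Set

/-- The lattice `Co P` of all order-convex subsets of a poset `P`. -/
def Co (P : Type*) [PartialOrder P] : Type _ := {s : Set P // s.OrdConnected}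

namespace Co

variable {P : Type*} [PartialOrder P]

instance : PartialOrder (Co P) := Subtype.partialOrder _

instance : InfSet (Co P) :=
  ⟨fun S => ⟨⋂ s ∈ S, s.1, Set.ordConnected_biInter fun s _ => s.2⟩⟩

noncomputable instance : CompleteLattice (Co P) :=
  completeLatticeOfInf (Co P) (by
    intro S
    constructor
    · intro t ht
      exact Set.biInter_subset_of_mem (t := fun s => s.1) ht
    · intro b hb
      exact Set.subset_iInter₂ fun t ht => hb ht)

/-- The order-convex subset of `P` with underlying set `X`. -/
def mk' (X : Set P) (hX : X.OrdConnected) : Co P := ⟨X, hX⟩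

/-- The singleton `{p}`, as an order-convex set. -/
def sngl (p : P) : Co P := ⟨{p}, Set.ordConnected_singleton⟩

/-- The empty order-convex set. -/
def emp : Co P := ⟨∅, Set.ordConnected_empty⟩

end Co

/-- `lengthLE P n` states that the poset `P` has length at most `n`, that is,
every finite chain of `P` has at most `n + 1` elements. -/
def lengthLE (P : Type*) [PartialOrder P] (n : ℕ) : Prop :=
  ∀ C : Finset P, IsChain (· ≤ ·) (C : Set P) → C.card ≤ n + 1

section Identities

/-- The Stirlitz identity (S). -/
def IdS (L : Type*) [Lattice L] : Prop :=
  ∀ a b b₀ b₁ c : L,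
    a ⊓ ((b ⊓ (b₀ ⊔ b₁)) ⊔ c) =
      (a ⊓ (b ⊓ (b₀ ⊔ b₁)))
      ⊔ (a ⊓ (b₀ ⊔ c) ⊓ ((b ⊓ (b₀ ⊔ b₁) ⊓ (a ⊔ b₀)) ⊔ c))
      ⊔ (a ⊓ (b₁ ⊔ c) ⊓ ((b ⊓ (b₀ ⊔ b₁) ⊓ (a ⊔ b₁)) ⊔ c))

/-- The Udav identity (U). -/
def IdU (L : Type*) [Lattice L] : Prop :=
  ∀ x x₀ x₁ x₂ : L,
    x ⊓ (x₀ ⊔ x₁) ⊓ (x₁ ⊔ x₂) ⊓ (x₀ ⊔ x₂) =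
      (x ⊓ x₀ ⊓ (x₁ ⊔ x₂)) ⊔ (x ⊓ x₁ ⊓ (x₀ ⊔ x₂)) ⊔ (x ⊓ x₂ ⊓ (x₀ ⊔ x₁))

/-- The Bond identity (B). -/
def IdB (L : Type*) [Lattice L] : Prop :=
  ∀ x a₀ a₁ b₀ b₁ : L,
    x ⊓ (a₀ ⊔ a₁) ⊓ (b₀ ⊔ b₁) =
      (x ⊓ a₀ ⊓ (b₀ ⊔ b₁)) ⊔ (x ⊓ a₁ ⊓ (b₀ ⊔ b₁))
      ⊔ (x ⊓ b₀ ⊓ (a₀ ⊔ a₁)) ⊔ (x ⊓ b₁ ⊓ (a₀ ⊔ a₁))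
      ⊔ (x ⊓ (a₀ ⊔ a₁) ⊓ (b₀ ⊔ b₁) ⊓ (a₀ ⊔ b₀) ⊓ (a₁ ⊔ b₁))
      ⊔ (x ⊓ (a₀ ⊔ a₁) ⊓ (b₀ ⊔ b₁) ⊓ (a₀ ⊔ b₁) ⊓ (a₁ ⊔ b₀))

/-- The identity (L₂). -/
def IdL2 (L : Type*) [Lattice L] : Prop :=
  ∀ a b b' c c' : L,
    a ⊓ ((b ⊓ (c ⊔ c')) ⊔ b') =
      (a ⊓ b ⊓ (c ⊔ c')) ⊔ (a ⊓ ((b ⊓ c) ⊔ b')) ⊔ (a ⊓ ((b ⊓ c') ⊔ b'))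

variable {L : Type*} [Lattice L]

/-- The lattice polynomial `U_{i,n}` (in the variables `x₀, …, xₙ, x'₁, …, x'ₙ`). -/
def Upoly (x x' : ℕ → L) (n : ℕ) (i : ℕ) : L :=
  if h : n ≤ i then x n
  else x i ⊓ (Upoly x x' n (i + 1) ⊔ x' (i + 1))
  termination_by n - i
  decreasing_by omega

/-- The lattice polynomial `V_{i,j,n}`. -/
def Vpoly (x x' : ℕ → L) (n i : ℕ) (j : ℕ) : L :=
  if h : i ≤ j then (x i ⊓ Upoly x x' n (i + 1)) ⊔ (x i ⊓ x' (i + 1))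
  else x j ⊓ (Vpoly x x' n i (j + 1) ⊔ x' (j + 1))
  termination_by i - j
  decreasing_by omega

/-- The lattice polynomial `W_{i,j,n}`. -/
def Wpoly (x x' : ℕ → L) (n i : ℕ) (j : ℕ) : L :=
  if h : i ≤ j then
    x i ⊓ (x' (i + 1) ⊔ x' (i + 2)) ⊓ ((Upoly x x' n (i + 1) ⊓ (x i ⊔ x' (i + 2))) ⊔ x' (i + 1))
  else x j ⊓ (Wpoly x x' n i (j + 1) ⊔ x' (j + 1))
  termination_by i - j
  decreasing_by omega

/-- `bigJoin f k = f 0 ⊔ f 1 ⊔ ⋯ ⊔ f k`. -/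
def bigJoin (f : ℕ → L) : ℕ → L
  | 0 => f 0
  | k + 1 => bigJoin f k ⊔ f (k + 1)

end Identities

/-- The identity (Hₙ) : `Uₙ = ⋁_{0 ≤ i ≤ n-1} V_{i,n} ∨ ⋁_{0 ≤ i ≤ n-2} W_{i,n}`
(intended for `n ≥ 1`). -/
def IdH (n : ℕ) (L : Type*) [Lattice L] : Prop :=
  ∀ x x' : ℕ → L,
    Upoly x x' n 0 =
      bigJoin (fun i =>
        if i + 2 ≤ n then Vpoly x x' n i 0 ⊔ Wpoly x x' n i 0 else Vpoly x x' n i 0) (n - 1)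

/-- The identity (H_{m,n}) (intended for `m, n ≥ 1`); the common base point is
`x 0 = y 0 = t`. -/
def IdHmn (m n : ℕ) (L : Type*) [Lattice L] : Prop :=
  ∀ x x' y y' : ℕ → L, x 0 = y 0 →
    Upoly x x' m 0 ⊓ Upoly y y' n 0 =
      bigJoin (fun i =>
          if i + 2 ≤ m then
            (Vpoly x x' m i 0 ⊓ Upoly y y' n 0) ⊔ (Wpoly x x' m i 0 ⊓ Upoly y y' n 0)
          else Vpoly x x' m i 0 ⊓ Upoly y y' n 0) (m - 1)
      ⊔ bigJoin (fun j =>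
          if j + 2 ≤ n then
            (Upoly x x' m 0 ⊓ Vpoly y y' n j 0) ⊔ (Upoly x x' m 0 ⊓ Wpoly y y' n j 0)
          else Upoly x x' m 0 ⊓ Vpoly y y' n j 0) (n - 1)
      ⊔ (Upoly x x' m 0 ⊓ Upoly y y' n 0 ⊓ (x 1 ⊔ y' 1) ⊓ (x' 1 ⊔ y 1))

/-- `p` is join-irreducible: `p = x ⊔ y` implies `p = x` or `p = y`. -/
def JIrr {L : Type*} [Lattice L] (p : L) : Prop :=
  ∀ x y : L, p = x ⊔ y → p = x ∨ p = y

/-- The join-dependency relation `p D q`. -/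
def DRel {L : Type*} [Lattice L] (p q : L) : Prop :=
  p ≠ q ∧ ∃ x : L, p ≤ q ⊔ x ∧ ∀ y < q, ¬ p ≤ y ⊔ x

/-- A subset `S` of a lattice `L` is a join-seed. -/
def JoinSeed (L : Type*) [Lattice L] (S : Set L) : Prop :=
  (∀ p ∈ S, JIrr p) ∧
  (∀ a : L, ∃ T ⊆ S, IsLUB T a) ∧
  (∀ p ∈ S, ∀ a b : L, p ≤ a ⊔ b → ¬ p ≤ a → ¬ p ≤ b →
    ∃ x ∈ S, ∃ y ∈ S, x ≤ a ∧ y ≤ b ∧ p ≤ x ⊔ y ∧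
      (∀ x' < x, ¬ p ≤ x' ⊔ y) ∧ (∀ y' < y, ¬ p ≤ x ⊔ y'))

/-- The poset `P_{I,J} = I ∪ {p} ∪ J`, where every element of `I` is below `p`,
`p` is below every element of `J`, every element of `I` is below every element
of `J`, and there are no other strict comparabilities. -/
def PIJ (I J : Type*) : Type _ := I ⊕ (Unit ⊕ J)

namespace PIJ

variable {I J : Type*}

/-- The rank (height) of an element of `P_{I,J}`. -/
def rank (a : PIJ I J) : ℕ :=
  Sum.elim (fun _ => 0) (Sum.elim (fun _ => 1) fun _ => 2) a

instance : PartialOrder (PIJ I J) where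
  le a b := a = b ∨ rank a < rank b
  le_refl a := Or.inl rfl
  le_trans a b c hab hbc := by
    rcases hab with rfl | h
    · exact hbc
    · rcases hbc with rfl | h'
      · exact Or.inr h
      · exact Or.inr (h.trans h')
  le_antisymm a b hab hba := by
    rcases hab with rfl | h
    · rfl
    · rcases hba with rfl | h'
      · rfl
      · omega

end PIJ

/-- A poset is tree-like if it has no infinite bounded chain and between any two
points there is at most one repetition-free finite path with respect to the
covering relation. -/
def TreeLike (P : Type*) [PartialOrder P] : Prop :=
  (∀ C : Set P, IsChain (· ≤ ·) C → BddAbove C → BddBelow C → C.Finite) ∧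
  (∀ a b : P, ∀ l₁ l₂ : List P,
    l₁.Nodup → l₁.head? = some a → l₁.getLast? = some b →
      l₁.Chain' (fun u v => u ⋖ v ∨ v ⋖ u) →
    l₂.Nodup → l₂.head? = some a → l₂.getLast? = some b →
      l₂.Chain' (fun u v => u ⋖ v ∨ v ⋖ u) →
    l₁ = l₂)

/-- A subset `U` of a poset `P` is `D`-closed. -/
def DClosed {P : Type*} [PartialOrder P] (U : Set P) : Prop :=
  ∀ x p y : P, x < p → p < y → (x ∈ U ∨ y ∈ U) → p ∈ U

/-- A complete congruence of a complete lattice. -/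
structure IsCompleteCongr {L : Type*} [CompleteLattice L] (θ : L → L → Prop) : Prop where
  refl : ∀ x, θ x x
  symm : ∀ {x y}, θ x y → θ y x
  trans : ∀ {x y z}, θ x y → θ y z → θ x z
  sup : ∀ {a b c d}, θ a b → θ c d → θ (a ⊔ c) (b ⊔ d)
  inf : ∀ {a b c d}, θ a b → θ c d → θ (a ⊓ c) (b ⊓ d)
  cSup : ∀ (x : L) (Y : Set L), Y.Nonempty → (∀ y ∈ Y, θ x y) → θ x (sSup Y)
  cInf : ∀ (x : L) (Y : Set L), Y.Nonempty → (∀ y ∈ Y, θ x y) → θ x (sInf Y)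

/-- The map `h_U : Co(P) → Co(P ∖ U)`, `X ↦ X ∖ U`. -/
def coRestrict {P : Type*} [PartialOrder P] (U : Set P) (X : Co P) :
    Co {p : P // p ∉ U} :=
  ⟨Subtype.val ⁻¹' X.1, by
    constructor
    rintro a ha b hb z hz
    exact X.2.out ha hb ⟨hz.1, hz.2⟩⟩

/-- The lattice `D(P)` of all `D`-closed subsets of a poset `P`. -/
def DSub (P : Type*) [PartialOrder P] : Type _ := {U : Set P // DClosed U}

namespace DSub

variable {P : Type*} [PartialOrder P]

instance : PartialOrder (DSub P) := Subtype.partialOrder _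

instance : InfSet (DSub P) :=
  ⟨fun S => ⟨⋂ U ∈ S, U.1, by
    intro x p y h1 h2 h3
    simp only [Set.mem_iInter] at h3 ⊢
    intro U hU
    exact U.2 x p y h1 h2 (h3.imp (fun h => h U hU) fun h => h U hU)⟩⟩

noncomputable instance : CompleteLattice (DSub P) :=
  completeLatticeOfInf (DSub P) (by
    intro S
    constructor
    · intro t ht
      exact Set.biInter_subset_of_mem (t := fun U => U.1) ht
    · intro b hb
      exact Set.subset_iInter₂ fun t ht => hb ht)

end DSub

/-! ### Auxiliary development for Statement 3 -/

section AuxCo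

variable {P : Type*} [PartialOrder P]

theorem Co.le_iff' {X Y : Co P} : X ≤ Y ↔ X.1 ⊆ Y.1 := Iff.rfl

theorem Co.inf_coe' (X Y : Co P) : (X ⊓ Y).1 = X.1 ∩ Y.1 := by
  apply Set.Subset.antisymm
  · exact Set.subset_inter (Co.le_iff'.1 inf_le_left) (Co.le_iff'.1 inf_le_right)
  · exact Co.le_iff'.1
      (le_inf (show (⟨X.1 ∩ Y.1, X.2.inter Y.2⟩ : Co P) ≤ X from Set.inter_subset_left)
        (show (⟨X.1 ∩ Y.1, X.2.inter Y.2⟩ : Co P) ≤ Y from Set.inter_subset_right))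

/-- No chain of four elements. -/
def No4 (P : Type*) [PartialOrder P] : Prop :=
  ∀ a b c d : P, a < b → b < c → c < d → False

theorem Co.sup_coe' (h4 : No4 P) (X Y : Co P) :
    (X ⊔ Y).1 = {z | z ∈ X.1 ∨ z ∈ Y.1 ∨ (∃ x ∈ X.1, ∃ y ∈ Y.1, x < z ∧ z < y) ∨
      (∃ x ∈ Y.1, ∃ y ∈ X.1, x < z ∧ z < y)} := by
  set Z : Set P := {z | z ∈ X.1 ∨ z ∈ Y.1 ∨ (∃ x ∈ X.1, ∃ y ∈ Y.1, x < z ∧ z < y) ∨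
      (∃ x ∈ Y.1, ∃ y ∈ X.1, x < z ∧ z < y)} with hZ
  have hconv : Z.OrdConnected := by
    constructor
    intro u hu v hv w hw
    rcases eq_or_lt_of_le hw.1 with rfl | h1
    · exact hu
    rcases eq_or_lt_of_le hw.2 with rfl | h2
    · exact hv
    rcases hu with hu | hu | ⟨x, hx, y, hy, hxu, huy⟩ | ⟨x, hx, y, hy, hxu, huy⟩
    · rcases hv with hv | hv | ⟨x, hx, y, hy, hxv, hvy⟩ | ⟨x, hx, y, hy, hxv, hvy⟩
      · exact Or.inl (X.2.out hu hv ⟨h1.le, h2.le⟩)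
      · exact Or.inr (Or.inr (Or.inl ⟨u, hu, v, hv, h1, h2⟩))
      · exact (h4 u w v y h1 h2 hvy).elim
      · exact (h4 u w v y h1 h2 hvy).elim
    · rcases hv with hv | hv | ⟨x, hx, y, hy, hxv, hvy⟩ | ⟨x, hx, y, hy, hxv, hvy⟩
      · exact Or.inr (Or.inr (Or.inr ⟨u, hu, v, hv, h1, h2⟩))
      · exact Or.inr (Or.inl (Y.2.out hu hv ⟨h1.le, h2.le⟩))
      · exact (h4 u w v y h1 h2 hvy).elim
      · exact (h4 u w v y h1 h2 hvy).elim
    · exact (h4 x u w v hxu h1 h2).elim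
    · exact (h4 x u w v hxu h1 h2).elim
  apply Set.Subset.antisymm
  · exact Co.le_iff'.1 (sup_le
      (show X ≤ ⟨Z, hconv⟩ from fun z hz => Or.inl hz)
      (show Y ≤ ⟨Z, hconv⟩ from fun z hz => Or.inr (Or.inl hz)))
  · rintro z (hz | hz | ⟨x, hx, y, hy, h1, h2⟩ | ⟨x, hx, y, hy, h1, h2⟩)
    · exact Co.le_iff'.1 le_sup_left hz
    · exact Co.le_iff'.1 le_sup_right hz
    · exact (X ⊔ Y).2.out (Co.le_iff'.1 le_sup_left hx)
        (Co.le_iff'.1 le_sup_right hy) ⟨h1.le, h2.le⟩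
    · exact (X ⊔ Y).2.out (Co.le_iff'.1 le_sup_right hx)
        (Co.le_iff'.1 le_sup_left hy) ⟨h1.le, h2.le⟩

/-- `z` behaves like a "join-prime" evaluation point. -/
def HomLike (z : P) : Prop := ∀ X Y : Co P, z ∈ (X ⊔ Y).1 → z ∈ X.1 ∨ z ∈ Y.1

theorem homLike_of_min (h4 : No4 P) {z : P} (hz : ∀ u, ¬ u < z) : HomLike z := by
  intro X Y h
  rw [Co.sup_coe' h4] at h
  rcases h with h | h | ⟨x, _, y, _, hxz, _⟩ | ⟨x, _, y, _, hxz, _⟩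
  · exact Or.inl h
  · exact Or.inr h
  · exact (hz x hxz).elim
  · exact (hz x hxz).elim

theorem homLike_of_max (h4 : No4 P) {z : P} (hz : ∀ u, ¬ z < u) : HomLike z := by
  intro X Y h
  rw [Co.sup_coe' h4] at h
  rcases h with h | h | ⟨x, _, y, _, _, hzy⟩ | ⟨x, _, y, _, _, hzy⟩
  · exact Or.inl h
  · exact Or.inr h
  · exact (hz y hzy).elim
  · exact (hz y hzy).elim

end AuxCo

section AuxLen

variable {P : Type*} [PartialOrder P]

theorem no4_of_lengthLE (h : lengthLE P 2) : No4 P := by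
  classical
  intro a b c d hab hbc hcd
  have hac : a < c := hab.trans hbc
  have had : a < d := hac.trans hcd
  have hbd : b < d := hbc.trans hcd
  have hcard : ({a, b, c, d} : Finset P).card = 4 := by
    rw [Finset.card_insert_of_notMem, Finset.card_insert_of_notMem,
      Finset.card_insert_of_notMem, Finset.card_singleton]
    · simp [hcd.ne]
    · simp [hbc.ne, hbd.ne]
    · simp [hab.ne, hac.ne, had.ne]
  have hchain : IsChain (· ≤ ·) (({a, b, c, d} : Finset P) : Set P) := by
    intro x hx y hy hne
    simp only [Finset.coe_insert, Set.mem_insert_iff, Finset.coe_singleton,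
      Set.mem_singleton_iff] at hx hy
    rcases hx with rfl | rfl | rfl | rfl <;> rcases hy with rfl | rfl | rfl | rfl <;>
      first
        | exact (hne rfl).elim
        | exact Or.inl hab.le | exact Or.inr hab.le
        | exact Or.inl hbc.le | exact Or.inr hbc.le
        | exact Or.inl hcd.le | exact Or.inr hcd.le
        | exact Or.inl hac.le | exact Or.inr hac.le
        | exact Or.inl had.le | exact Or.inr had.le
        | exact Or.inl hbd.le | exact Or.inr hbd.le
  have := h _ hchain
  omega

end AuxLen

section AuxPIJ

variable {I J : Type*}

theorem PIJ.le_iff' {a b : PIJ I J} : a ≤ b ↔ (a = b ∨ PIJ.rank a < PIJ.rank b) := Iff.rfl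

theorem PIJ.rank_le_two (a : PIJ I J) : PIJ.rank a ≤ 2 := by
  rcases a with x | u | y <;> simp [PIJ.rank]

theorem PIJ.lt_iff' {a b : PIJ I J} : a < b ↔ PIJ.rank a < PIJ.rank b := by
  constructor
  · intro h
    rcases PIJ.le_iff'.1 h.le with rfl | h'
    · exact absurd rfl h.ne
    · exact h'
  · intro h
    constructor
    · exact Or.inr h
    · intro h'
      rcases PIJ.le_iff'.1 h' with rfl | h''
      · omega
      · omega

theorem no4_PIJ : No4 (PIJ I J) := by
  intro a b c d hab hbc hcd
  rw [PIJ.lt_iff'] at hab hbc hcd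
  have := PIJ.rank_le_two d
  omega

theorem PIJ.rank_inl (x : I) : PIJ.rank (Sum.inl x : PIJ I J) = 0 := rfl
theorem PIJ.rank_mid (u : Unit) : PIJ.rank (Sum.inr (Sum.inl u) : PIJ I J) = 1 := rfl
theorem PIJ.rank_inr (y : J) : PIJ.rank (Sum.inr (Sum.inr y) : PIJ I J) = 2 := rfl

end AuxPIJ

section AuxMain

universe v

variable {m : ℕ} {L : Type v} [Lattice L] {g : Fin m → L}
  {P : Type*} [PartialOrder P] {f : LatticeHom L (Co P)}

theorem mem_f_sup_left {a b : L} {z : P} (hz : z ∈ (f a).1) : z ∈ (f (a ⊔ b)).1 := by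
  have : f a ≤ f (a ⊔ b) := by rw [map_sup]; exact le_sup_left
  exact Co.le_iff'.1 this hz

theorem mem_f_sup_right {a b : L} {z : P} (hz : z ∈ (f b).1) : z ∈ (f (a ⊔ b)).1 := by
  have : f b ≤ f (a ⊔ b) := by rw [map_sup]; exact le_sup_right
  exact Co.le_iff'.1 this hz

theorem mem_f_inf {a b : L} {z : P} : z ∈ (f (a ⊓ b)).1 ↔ z ∈ (f a).1 ∧ z ∈ (f b).1 := by
  rw [map_inf, Co.inf_coe']; exact Iff.rfl

theorem eval_congr (hg : latticeClosure (Set.range g) = Set.univ)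
    {z z' : P} (hz : HomLike z) (hz' : HomLike z')
    (hpat : ∀ i, z ∈ (f (g i)).1 ↔ z' ∈ (f (g i)).1) (a : L) :
    z ∈ (f a).1 ↔ z' ∈ (f a).1 := by
  have hsub : latticeClosure (Set.range g) ⊆ {a : L | z ∈ (f a).1 ↔ z' ∈ (f a).1} := by
    apply latticeClosure_min
    · rintro _ ⟨i, rfl⟩
      exact hpat i
    · constructor
      · intro a ha b hb
        simp only [Set.mem_setOf_eq] at ha hb ⊢
        constructor
        · intro h
          rw [map_sup] at h
          rcases hz _ _ h with h | h
          · exact mem_f_sup_left (ha.1 h)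
          · exact mem_f_sup_right (hb.1 h)
        · intro h
          rw [map_sup] at h
          rcases hz' _ _ h with h | h
          · exact mem_f_sup_left (ha.2 h)
          · exact mem_f_sup_right (hb.2 h)
      · intro a ha b hb
        simp only [Set.mem_setOf_eq] at ha hb ⊢
        rw [mem_f_inf, mem_f_inf, ha, hb]
  exact hsub (by rw [hg]; exact Set.mem_univ a)

theorem pat_nonempty (hg : latticeClosure (Set.range g) = Set.univ)
    {z : P} (hz : HomLike z) {a : L} (ha : z ∈ (f a).1) : ∃ i, z ∈ (f (g i)).1 := by
  have hsub : latticeClosure (Set.range g) ⊆ {a : L | z ∈ (f a).1 → ∃ i, z ∈ (f (g i)).1} := by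
    apply latticeClosure_min
    · rintro _ ⟨i, rfl⟩ _
      exact ⟨i, by assumption⟩
    · constructor
      · intro a ha b hb
        simp only [Set.mem_setOf_eq] at ha hb ⊢
        intro h
        rw [map_sup] at h
        rcases hz _ _ h with h | h
        · exact ha h
        · exact hb h
      · intro a ha b hb
        simp only [Set.mem_setOf_eq] at ha hb ⊢
        intro h
        exact ha (mem_f_inf.1 h).1
  exact hsub (by rw [hg]; exact Set.mem_univ a) ha

theorem card_nonempty_patterns (m : ℕ) :
    ({S : Set (Fin m) | S.Nonempty}).ncard = 2 ^ m - 1 := by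
  classical
  have h1 : {S : Set (Fin m) | S.Nonempty} = ({(∅ : Set (Fin m))} : Set (Set (Fin m)))ᶜ := by
    ext S
    simp [Set.nonempty_iff_ne_empty]
  have h2 := Set.ncard_add_ncard_compl ({(∅ : Set (Fin m))} : Set (Set (Fin m)))
    (Set.toFinite _) (Set.toFinite _)
  have h3 : Nat.card (Set (Fin m)) = 2 ^ m := by
    rw [Nat.card_eq_fintype_card, Fintype.card_set, Fintype.card_fin]
  rw [Set.ncard_singleton, h3] at h2
  rw [h1]
  omega

end AuxMain

section Component

universe v w

variable {m : ℕ} {L : Type v} [Lattice L] {P : Type w} [PartialOrder P]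

/-- The generator-membership pattern of a point. -/
def patt (f : LatticeHom L (Co P)) (g : Fin m → L) (z : P) : Set (Fin m) :=
  {i | z ∈ (f (g i)).1}

def SIset (f : LatticeHom L (Co P)) (g : Fin m → L) (p : P) : Set (Set (Fin m)) :=
  {S | S.Nonempty ∧ ∃ x, x < p ∧ patt f g x = S}

def SJset (f : LatticeHom L (Co P)) (g : Fin m → L) (p : P) : Set (Set (Fin m)) :=
  {T | (T.Nonempty ∧ ∃ y, p < y ∧ patt f g y = T) ∧ T ∉ SIset f g p}

def Fset (f : LatticeHom L (Co P)) (g : Fin m → L) (p : P) (a : L) :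
    Set (PIJ (ULift.{v} ↥(SIset f g p)) (ULift.{v} ↥(SJset f g p))) :=
  {w | Sum.elim (fun S : ULift.{v} ↥(SIset f g p) =>
        ∃ x, x < p ∧ patt f g x = S.down.1 ∧ x ∈ (f a).1)
      (Sum.elim (fun _ : Unit => p ∈ (f a).1)
        (fun T : ULift.{v} ↥(SJset f g p) =>
          ∃ y, p < y ∧ patt f g y = T.down.1 ∧ y ∈ (f a).1)) w}

variable {f : LatticeHom L (Co P)} {g : Fin m → L} {p : P} {a : L}

theorem mem_Fset_inl {S : ULift.{v} ↥(SIset f g p)} :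
    Sum.inl S ∈ Fset f g p a ↔ ∃ x, x < p ∧ patt f g x = S.down.1 ∧ x ∈ (f a).1 := Iff.rfl

theorem mem_Fset_mid {u : Unit} :
    Sum.inr (Sum.inl u) ∈ Fset f g p a ↔ p ∈ (f a).1 := Iff.rfl

theorem mem_Fset_inr {T : ULift.{v} ↥(SJset f g p)} :
    Sum.inr (Sum.inr T) ∈ Fset f g p a ↔ ∃ y, p < y ∧ patt f g y = T.down.1 ∧ y ∈ (f a).1 :=
  Iff.rfl

theorem Fset_conv : (Fset f g p a).OrdConnected := by
  constructor
  intro u hu v hv w hw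
  rcases eq_or_lt_of_le hw.1 with rfl | h1
  · exact hu
  rcases eq_or_lt_of_le hw.2 with rfl | h2
  · exact hv
  rw [PIJ.lt_iff'] at h1 h2
  rcases w with Sw | w' | Tw
  · exact absurd h1 (Nat.not_lt_zero _)
  · rcases u with Su | u' | Tu
    · rcases v with Sv | v' | Tv
      · exact absurd h2 (Nat.not_lt_zero _)
      · exact absurd h2 (lt_irrefl 1)
      · obtain ⟨x, hxp, _, hxa⟩ := mem_Fset_inl.1 hu
        obtain ⟨y, hpy, _, hya⟩ := mem_Fset_inr.1 hv
        exact mem_Fset_mid.2 ((f a).2.out hxa hya ⟨hxp.le, hpy.le⟩)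
    · exact absurd h1 (lt_irrefl 1)
    · exact absurd (h1.trans_le (by exact le_refl 1)) ((by decide : ¬ (2:ℕ) < 1))
  · exact absurd (h2.trans_le (PIJ.rank_le_two v)) (Nat.lt_irrefl 2)

theorem component (hm : 2 ≤ m) (hg : latticeClosure (Set.range g) = Set.univ)
    (h4 : No4 P) (p : P) :
    ∃ (I : Type v) (J : Type v), Nonempty I ∧ Nonempty J ∧ Finite I ∧ Finite J ∧
      Nat.card I + Nat.card J ≤ 2 ^ m - 1 ∧
      ∃ e : LatticeHom L (Co (PIJ I J)),
        ∀ a b : L, e a = e b → (p ∈ (f a).1 ↔ p ∈ (f b).1) := by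
  classical
  have hm4 : 4 ≤ 2 ^ m := by
    calc (4 : ℕ) = 2 ^ 2 := rfl
    _ ≤ 2 ^ m := Nat.pow_le_pow_right (by norm_num) hm
  by_cases hgood : ∀ a b : L, p ∈ (f (a ⊔ b)).1 → p ∈ (f a).1 ∨ p ∈ (f b).1
  · -- the "good" case: evaluation at p is a lattice homomorphism
    refine ⟨PUnit, PUnit, ⟨⟨⟩⟩, ⟨⟨⟩⟩, inferInstance, inferInstance, ?_, ?_⟩
    · rw [Nat.card_unique]; omega
    set T : Co (PIJ PUnit PUnit) := ⟨Set.univ, Set.ordConnected_univ⟩ with hT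
    set B : Co (PIJ PUnit PUnit) := ⟨∅, Set.ordConnected_empty⟩ with hB
    have hBle : ∀ X : Co (PIJ PUnit PUnit), B ≤ X := fun X => Set.empty_subset _
    refine ⟨⟨⟨fun a => if p ∈ (f a).1 then T else B, ?_⟩, ?_⟩, ?_⟩
    · intro a b
      show (if p ∈ (f (a ⊔ b)).1 then T else B) =
        (if p ∈ (f a).1 then T else B) ⊔ (if p ∈ (f b).1 then T else B)
      by_cases ha : p ∈ (f a).1 <;> by_cases hb : p ∈ (f b).1
      · rw [if_pos ha, if_pos hb, if_pos (mem_f_sup_left ha), sup_idem]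
      · rw [if_pos ha, if_neg hb, if_pos (mem_f_sup_left ha), sup_eq_left.2 (hBle T)]
      · rw [if_neg ha, if_pos hb, if_pos (mem_f_sup_right hb), sup_eq_right.2 (hBle T)]
      · rw [if_neg ha, if_neg hb, if_neg (fun h => (hgood a b h).elim ha hb), sup_idem]
    · intro a b
      show (if p ∈ (f (a ⊓ b)).1 then T else B) =
        (if p ∈ (f a).1 then T else B) ⊓ (if p ∈ (f b).1 then T else B)
      by_cases ha : p ∈ (f a).1 <;> by_cases hb : p ∈ (f b).1
      · rw [if_pos ha, if_pos hb, if_pos (mem_f_inf.2 ⟨ha, hb⟩), inf_idem]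
      · rw [if_pos ha, if_neg hb, if_neg (fun h => hb (mem_f_inf.1 h).2),
          inf_eq_right.2 (hBle T)]
      · rw [if_neg ha, if_pos hb, if_neg (fun h => ha (mem_f_inf.1 h).1),
          inf_eq_left.2 (hBle T)]
      · rw [if_neg ha, if_neg hb, if_neg (fun h => ha (mem_f_inf.1 h).1), inf_idem]
    · intro a b hab
      have hab' : (if p ∈ (f a).1 then T else B) = (if p ∈ (f b).1 then T else B) := hab
      by_cases ha : p ∈ (f a).1 <;> by_cases hb : p ∈ (f b).1
      · exact iff_of_true ha hb
      · exfalso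
        rw [if_pos ha, if_neg hb] at hab'
        have h2 : (Set.univ : Set (PIJ PUnit PUnit)) = ∅ := congrArg Subtype.val hab'
        exact (Set.ext_iff.1 h2 (Sum.inr (Sum.inl ()))).1 trivial
      · exfalso
        rw [if_neg ha, if_pos hb] at hab'
        have h2 : (∅ : Set (PIJ PUnit PUnit)) = Set.univ := congrArg Subtype.val hab'
        exact (Set.ext_iff.1 h2 (Sum.inr (Sum.inl ()))).2 trivial
      · exact iff_of_false ha hb
  · -- the "bad" case
    push_neg at hgood
    obtain ⟨a₁, b₁, hp1, hpa1, hpb1⟩ := hgood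
    rw [map_sup, Co.sup_coe' h4] at hp1
    obtain ⟨aw, bw, hpaw, hpbw, x₁, hx₁w, y₁, hy₁w, hx₁p, hpy₁⟩ :
        ∃ a b : L, p ∉ (f a).1 ∧ p ∉ (f b).1 ∧
          ∃ x, x ∈ (f a).1 ∧ ∃ y, y ∈ (f b).1 ∧ x < p ∧ p < y := by
      rcases hp1 with h | h | ⟨x, hx, y, hy, hxp, hpy⟩ | ⟨x, hx, y, hy, hxp, hpy⟩
      · exact (hpa1 h).elim
      · exact (hpb1 h).elim
      · exact ⟨a₁, b₁, hpa1, hpb1, x, hx, y, hy, hxp, hpy⟩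
      · exact ⟨b₁, a₁, hpb1, hpa1, x, hx, y, hy, hxp, hpy⟩
    have hmin : ∀ x : P, x < p → ∀ u : P, ¬ u < x :=
      fun x hx u hu => h4 u x p y₁ hu hx hpy₁
    have hmax : ∀ y : P, p < y → ∀ u : P, ¬ y < u :=
      fun y hy u hu => h4 x₁ p y u hx₁p hy hu
    have hHLlo : ∀ x : P, x < p → HomLike x := fun x hx => homLike_of_min h4 (hmin x hx)
    have hHLhi : ∀ y : P, p < y → HomLike y := fun y hy => homLike_of_max h4 (hmax y hy)
    have congrlo : ∀ x x' : P, x < p → x' < p → patt f g x = patt f g x' →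
        ∀ a : L, x ∈ (f a).1 ↔ x' ∈ (f a).1 := by
      intro x x' hx hx' hpp a
      exact eval_congr hg (hHLlo x hx) (hHLlo x' hx')
        (fun i => by have := Set.ext_iff.1 hpp i; simpa [patt] using this) a
    have congrlohi : ∀ x y : P, x < p → p < y → patt f g x = patt f g y →
        ∀ a : L, x ∈ (f a).1 ↔ y ∈ (f a).1 := by
      intro x y hx hy hpp a
      exact eval_congr hg (hHLlo x hx) (hHLhi y hy)
        (fun i => by have := Set.ext_iff.1 hpp i; simpa [patt] using this) a
    have congrhi : ∀ y y' : P, p < y → p < y' → patt f g y = patt f g y' →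
        ∀ a : L, y ∈ (f a).1 ↔ y' ∈ (f a).1 := by
      intro y y' hy hy' hpp a
      exact eval_congr hg (hHLhi y hy) (hHLhi y' hy')
        (fun i => by have := Set.ext_iff.1 hpp i; simpa [patt] using this) a
    refine ⟨ULift.{v} ↥(SIset f g p), ULift.{v} ↥(SJset f g p), ?_, ?_,
      inferInstance, inferInstance, ?_, ?_⟩
    · obtain ⟨i, hi⟩ := pat_nonempty hg (hHLlo x₁ hx₁p) hx₁w
      exact ⟨⟨⟨patt f g x₁, ⟨⟨i, hi⟩, x₁, hx₁p, rfl⟩⟩⟩⟩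
    · obtain ⟨i, hi⟩ := pat_nonempty hg (hHLhi y₁ hpy₁) hy₁w
      refine ⟨⟨⟨patt f g y₁, ⟨⟨⟨i, hi⟩, y₁, hpy₁, rfl⟩, ?_⟩⟩⟩⟩
      rintro ⟨-, x', hx'p, hpp⟩
      have hx'b : x' ∈ (f bw).1 := (congrlohi x' y₁ hx'p hpy₁ hpp bw).2 hy₁w
      exact hpbw ((f bw).2.out hx'b hy₁w ⟨hx'p.le, hpy₁.le⟩)
    · have hI : Nat.card (ULift.{v} ↥(SIset f g p)) = (SIset f g p).ncard := by
        rw [Nat.card_congr Equiv.ulift, Nat.card_coe_set_eq]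
      have hJ : Nat.card (ULift.{v} ↥(SJset f g p)) = (SJset f g p).ncard := by
        rw [Nat.card_congr Equiv.ulift, Nat.card_coe_set_eq]
      have hdisj : Disjoint (SIset f g p) (SJset f g p) :=
        Set.disjoint_left.2 fun S hS hS' => hS'.2 hS
      have hunion := Set.ncard_union_eq hdisj (Set.toFinite _) (Set.toFinite _)
      have hsub : SIset f g p ∪ SJset f g p ⊆ {S : Set (Fin m) | S.Nonempty} := by
        rintro S (hS | hS)
        · exact hS.1
        · exact hS.1.1
      have hle := Set.ncard_le_ncard hsub (Set.toFinite _)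
      rw [card_nonempty_patterns] at hle
      omega
    · refine ⟨⟨⟨fun a => ⟨Fset f g p a, Fset_conv⟩, ?_⟩, ?_⟩, ?_⟩
      · -- map_sup
        intro a b
        apply Subtype.ext
        show Fset f g p (a ⊔ b) = (Co.mk' (Fset f g p a) Fset_conv ⊔ Co.mk' (Fset f g p b) Fset_conv).1
        rw [Co.sup_coe' no4_PIJ]
        ext w
        rcases w with S | w' | T
        · constructor
          · rintro ⟨x, hxp, hpx, hxa⟩
            have hxa' : x ∈ (f (a ⊔ b)).1 := hxa
            rw [map_sup, Co.sup_coe' h4] at hxa'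
            rcases hxa' with h | h | ⟨x', -, y', -, hx'x, -⟩ | ⟨x', -, y', -, hx'x, -⟩
            · exact Or.inl ⟨x, hxp, hpx, h⟩
            · exact Or.inr (Or.inl ⟨x, hxp, hpx, h⟩)
            · exact (hmin x hxp x' hx'x).elim
            · exact (hmin x hxp x' hx'x).elim
          · rintro (⟨x, hxp, hpx, hxa⟩ | ⟨x, hxp, hpx, hxa⟩ |
              ⟨u, -, v, -, hu, -⟩ | ⟨u, -, v, -, hu, -⟩)
            · exact ⟨x, hxp, hpx, mem_f_sup_left hxa⟩
            · exact ⟨x, hxp, hpx, mem_f_sup_right hxa⟩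
            · exact absurd (PIJ.lt_iff'.1 hu) (Nat.not_lt_zero _)
            · exact absurd (PIJ.lt_iff'.1 hu) (Nat.not_lt_zero _)
        · constructor
          · intro h
            have h' : p ∈ (f (a ⊔ b)).1 := h
            rw [map_sup, Co.sup_coe' h4] at h'
            rcases h' with h' | h' | ⟨x, hx, y, hy, hxp, hpy⟩ | ⟨x, hx, y, hy, hxp, hpy⟩
            · exact Or.inl h'
            · exact Or.inr (Or.inl h')
            · by_cases hTI : patt f g y ∈ SIset f g p
              · obtain ⟨-, x', hx'p, hpp⟩ := hTI
                have hx'b : x' ∈ (f b).1 := (congrlohi x' y hx'p hpy hpp b).2 hy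
                exact Or.inr (Or.inl (mem_Fset_mid.2
                  ((f b).2.out hx'b hy ⟨hx'p.le, hpy.le⟩)))
              · refine Or.inr (Or.inr (Or.inl
                  ⟨Sum.inl ⟨⟨patt f g x,
                      (pat_nonempty hg (hHLlo x hxp) hx).imp (fun i hi => hi),
                      x, hxp, rfl⟩⟩, ⟨x, hxp, rfl, hx⟩,
                    Sum.inr (Sum.inr ⟨⟨patt f g y,
                      ⟨⟨(pat_nonempty hg (hHLhi y hpy) hy).imp (fun i hi => hi),
                        y, hpy, rfl⟩, hTI⟩⟩⟩), ⟨y, hpy, rfl, hy⟩, ?_, ?_⟩))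
                · exact PIJ.lt_iff'.2 Nat.zero_lt_one
                · exact PIJ.lt_iff'.2 Nat.one_lt_two
            · by_cases hTI : patt f g y ∈ SIset f g p
              · obtain ⟨-, x', hx'p, hpp⟩ := hTI
                have hx'a : x' ∈ (f a).1 := (congrlohi x' y hx'p hpy hpp a).2 hy
                exact Or.inl (mem_Fset_mid.2 ((f a).2.out hx'a hy ⟨hx'p.le, hpy.le⟩))
              · refine Or.inr (Or.inr (Or.inr
                  ⟨Sum.inl ⟨⟨patt f g x,
                      (pat_nonempty hg (hHLlo x hxp) hx).imp (fun i hi => hi),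
                      x, hxp, rfl⟩⟩, ⟨x, hxp, rfl, hx⟩,
                    Sum.inr (Sum.inr ⟨⟨patt f g y,
                      ⟨⟨(pat_nonempty hg (hHLhi y hpy) hy).imp (fun i hi => hi),
                        y, hpy, rfl⟩, hTI⟩⟩⟩), ⟨y, hpy, rfl, hy⟩, ?_, ?_⟩))
                · exact PIJ.lt_iff'.2 Nat.zero_lt_one
                · exact PIJ.lt_iff'.2 Nat.one_lt_two
          · rintro (h | h | ⟨u, hu, v, hv, hup, hpv⟩ | ⟨u, hu, v, hv, hup, hpv⟩)
            · exact mem_f_sup_left h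
            · exact mem_f_sup_right h
            · rcases u with Su | u' | Tu
              · rcases v with Sv | v' | Tv
                · exact absurd (PIJ.lt_iff'.1 hpv) (Nat.not_lt_zero _)
                · exact absurd (PIJ.lt_iff'.1 hpv) (lt_irrefl 1)
                · obtain ⟨x, hxp, -, hxa⟩ := mem_Fset_inl.1 hu
                  obtain ⟨y, hpy, -, hyb⟩ := mem_Fset_inr.1 hv
                  show p ∈ (f (a ⊔ b)).1
                  rw [map_sup, Co.sup_coe' h4]
                  exact Or.inr (Or.inr (Or.inl ⟨x, hxa, y, hyb, hxp, hpy⟩))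
              · exact absurd (PIJ.lt_iff'.1 hup) (lt_irrefl 1)
              · exact absurd (PIJ.lt_iff'.1 hup) ((by decide : ¬ (2:ℕ) < 1))
            · rcases u with Su | u' | Tu
              · rcases v with Sv | v' | Tv
                · exact absurd (PIJ.lt_iff'.1 hpv) (Nat.not_lt_zero _)
                · exact absurd (PIJ.lt_iff'.1 hpv) (lt_irrefl 1)
                · obtain ⟨x, hxp, -, hxb⟩ := mem_Fset_inl.1 hu
                  obtain ⟨y, hpy, -, hya⟩ := mem_Fset_inr.1 hv
                  show p ∈ (f (a ⊔ b)).1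
                  rw [map_sup, Co.sup_coe' h4]
                  exact Or.inr (Or.inr (Or.inr ⟨x, hxb, y, hya, hxp, hpy⟩))
              · exact absurd (PIJ.lt_iff'.1 hup) (lt_irrefl 1)
              · exact absurd (PIJ.lt_iff'.1 hup) ((by decide : ¬ (2:ℕ) < 1))
        · constructor
          · rintro ⟨y, hpy, hpt, hya⟩
            have hya' : y ∈ (f (a ⊔ b)).1 := hya
            rw [map_sup, Co.sup_coe' h4] at hya'
            rcases hya' with h | h | ⟨x', -, y', -, -, hyy'⟩ | ⟨x', -, y', -, -, hyy'⟩
            · exact Or.inl ⟨y, hpy, hpt, h⟩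
            · exact Or.inr (Or.inl ⟨y, hpy, hpt, h⟩)
            · exact (hmax y hpy y' hyy').elim
            · exact (hmax y hpy y' hyy').elim
          · rintro (⟨y, hpy, hpt, hya⟩ | ⟨y, hpy, hpt, hya⟩ |
              ⟨u, -, v, -, -, hv⟩ | ⟨u, -, v, -, -, hv⟩)
            · exact ⟨y, hpy, hpt, mem_f_sup_left hya⟩
            · exact ⟨y, hpy, hpt, mem_f_sup_right hya⟩
            · exact absurd ((PIJ.lt_iff'.1 hv).trans_le (PIJ.rank_le_two v))
                (Nat.lt_irrefl 2)
            · exact absurd ((PIJ.lt_iff'.1 hv).trans_le (PIJ.rank_le_two v))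
                (Nat.lt_irrefl 2)
      · -- map_inf
        intro a b
        apply Subtype.ext
        show Fset f g p (a ⊓ b) = (Co.mk' (Fset f g p a) Fset_conv ⊓ Co.mk' (Fset f g p b) Fset_conv).1
        rw [Co.inf_coe']
        ext w
        rcases w with S | w' | T
        · constructor
          · rintro ⟨x, hxp, hpx, hxa⟩
            exact ⟨⟨x, hxp, hpx, (mem_f_inf.1 hxa).1⟩, ⟨x, hxp, hpx, (mem_f_inf.1 hxa).2⟩⟩
          · rintro ⟨⟨x, hxp, hpx, hxa⟩, ⟨x', hx'p, hpx', hx'b⟩⟩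
            have hxb : x ∈ (f b).1 := (congrlo x x' hxp hx'p (hpx.trans hpx'.symm) b).2 hx'b
            exact ⟨x, hxp, hpx, mem_f_inf.2 ⟨hxa, hxb⟩⟩
        · exact ⟨fun h => ⟨(mem_f_inf.1 h).1, (mem_f_inf.1 h).2⟩,
            fun h => mem_f_inf.2 ⟨h.1, h.2⟩⟩
        · constructor
          · rintro ⟨y, hpy, hpt, hya⟩
            exact ⟨⟨y, hpy, hpt, (mem_f_inf.1 hya).1⟩, ⟨y, hpy, hpt, (mem_f_inf.1 hya).2⟩⟩
          · rintro ⟨⟨y, hpy, hpt, hya⟩, ⟨y', hpy', hpt', hy'b⟩⟩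
            have hyb : y ∈ (f b).1 := (congrhi y y' hpy hpy' (hpt.trans hpt'.symm) b).2 hy'b
            exact ⟨y, hpy, hpt, mem_f_inf.2 ⟨hya, hyb⟩⟩
      · -- recovery
        intro a b hab
        have h2 : Fset f g p a = Fset f g p b := congrArg Subtype.val hab
        exact Set.ext_iff.1 h2 (Sum.inr (Sum.inl ()))

end Component

theorem stmt3.{u} (m : ℕ) (hm : 2 ≤ m) (L : Type u) [Lattice L]
    (g : Fin m → L) (hg : latticeClosure (Set.range g) = Set.univ)
    (P : Type u) [PartialOrder P] (hP : lengthLE P 2)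
    (f : LatticeHom L (Co P)) (hf : Function.Injective f) :
    ∃ (ι : Type u) (I J : ι → Type u)
      (_ : ∀ i, Nonempty (I i)) (_ : ∀ i, Nonempty (J i))
      (_ : ∀ i, Finite (I i)) (_ : ∀ i, Finite (J i)),
      (∀ i, Nat.card (I i) + Nat.card (J i) ≤ 2 ^ m - 1) ∧
      ∃ e : LatticeHom L (∀ i, Co (PIJ (I i) (J i))), Function.Injective e := by
  classical
  have h4 : No4 P := no4_of_lengthLE hP
  have key : ∀ p : P, ∃ (I : Type u) (J : Type u), Nonempty I ∧ Nonempty J ∧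
      Finite I ∧ Finite J ∧ Nat.card I + Nat.card J ≤ 2 ^ m - 1 ∧
      ∃ e : LatticeHom L (Co (PIJ I J)),
        ∀ a b : L, e a = e b → (p ∈ (f a).1 ↔ p ∈ (f b).1) :=
    fun p => component hm hg h4 p
  choose I J hN1 hN2 hF1 hF2 hcard e he using key
  refine ⟨P, I, J, hN1, hN2, hF1, hF2, hcard,
    ⟨⟨fun a => fun p => e p a, ?_⟩, ?_⟩, ?_⟩
  · intro a b
    funext p
    exact map_sup (e p) a b
  · intro a b
    funext p
    exact map_inf (e p) a b
  · intro a b hab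
    apply hf
    apply Subtype.ext
    ext z
    exact he z a b (congrFun hab z)
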